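/- Shannon's noisy channel coding theorem for the binary symmetric channel: let p be a real number with 0 < p < 1/2, let δ > 0 be any small positive real number, and let ρ be a positive rate with ρ < C = 1 - h₂(p). Then for all sufficiently large block lengths n there exist a code C_n ⊆ (Fin n → ZMod 2) with |C_n| ≥ 2^(ρ n) and a decoding map D : (Fin n → ZMod 2) → C_n such that the average probability of correct decoding exceeds 1 - δ; that is, (1/|C_n|) · Σ_{u ∈ C_n} Σ_{e ∈ (Fin n → ZMod 2)} p^(wt(e)) (1-p)^(n - wt(e)) · [D(u + e) = u] > 1 - δ, where wt(e) denotes the Hamming weight of e and [·] is the indicator of the event that decoding is correct. -/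

import Mathlib

open Finset

/-- The binary entropy function `h₂(x) = -x log₂ x - (1-x) log₂ (1-x)`. -/
noncomputable def binEnt (x : ℝ) : ℝ :=
  -(x * Real.logb 2 x) - (1 - x) * Real.logb 2 (1 - x)

lemma sum_weight (n : ℕ) (a b : ℝ) :
    ∑ e : Fin n → ZMod 2, a ^ hammingNorm e * b ^ (n - hammingNorm e) = (a + b) ^ n := by
  classical
  have key : ∀ e : Fin n → ZMod 2, a ^ hammingNorm e * b ^ (n - hammingNorm e)
      = ∏ i, (if e i ≠ 0 then a else b) := by
    intro e
    rw [Finset.prod_ite (f := fun _ => a) (g := fun _ => b), Finset.prod_const,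
      Finset.prod_const]
    have c1 : #(filter (fun i => e i ≠ 0) univ) = hammingNorm e := rfl
    have c2 : #(filter (fun i => ¬ e i ≠ 0) univ) = n - hammingNorm e := by
      have h3 := Finset.card_filter_add_card_filter_not
        (s := (Finset.univ : Finset (Fin n))) (p := fun i => e i ≠ 0)
      have h4 : #(univ : Finset (Fin n)) = n := by simp
      omega
    rw [c1, c2]
  rw [Finset.sum_congr rfl fun e _ => key e]
  have := Finset.prod_univ_sum (fun _ : Fin n => (Finset.univ : Finset (ZMod 2)))
    (fun _ x => if x ≠ 0 then a else b)
  rw [Fintype.piFinset_univ] at this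
  rw [← this]
  have h2 : ∑ x : ZMod 2, (if x ≠ 0 then a else b) = a + b := by
    rw [show (Finset.univ : Finset (ZMod 2)) = {0, 1} from by decide]
    norm_num [Finset.sum_insert, add_comm]
  rw [Finset.prod_congr rfl fun i _ => h2, Finset.prod_const, Finset.card_univ,
    Fintype.card_fin]

lemma sum_eval {I X : Type*} [Fintype I] [DecidableEq I] [Fintype X] [DecidableEq X]
    (i : I) (G : X → ℝ) :
    ∑ f : I → X, G (f i) = (Fintype.card X : ℝ) ^ (Fintype.card I - 1) * ∑ a, G a := by
  classical
  rw [← Equiv.sum_comp (Equiv.funSplitAt i X).symm (fun f => G (f i))]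
  have h : ∀ q : X × ({ j // j ≠ i } → X), ((Equiv.funSplitAt i X).symm q) i = q.1 := by
    intro q; simp [Equiv.funSplitAt, Equiv.piSplitAt]
  simp only [h]
  rw [Fintype.sum_prod_type]
  simp only [Finset.sum_const, Finset.card_univ, nsmul_eq_mul]
  rw [← Finset.mul_sum]
  congr 1
  rw [Fintype.card_fun]
  have : Fintype.card { j // j ≠ i } = Fintype.card I - 1 := by
    have := Fintype.card_subtype_compl (fun j : I => j = i)
    simpa [Fintype.card_subtype_eq] using this
  rw [this]
  push_cast
  rfl

lemma sum_eval_pair {I X : Type*} [Fintype I] [DecidableEq I] [Fintype X] [DecidableEq X]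
    {i j : I} (hij : i ≠ j) (g : X → X → ℝ) :
    ∑ f : I → X, g (f i) (f j) =
      (Fintype.card X : ℝ) ^ (Fintype.card I - 2) * ∑ a, ∑ b, g a b := by
  classical
  rw [← Equiv.sum_comp (Equiv.funSplitAt j X).symm (fun f => g (f i) (f j))]
  have h1 : ∀ q : X × ({ k // k ≠ j } → X), ((Equiv.funSplitAt j X).symm q) j = q.1 := by
    intro q; simp [Equiv.funSplitAt, Equiv.piSplitAt]
  have h2 : ∀ q : X × ({ k // k ≠ j } → X),
      ((Equiv.funSplitAt j X).symm q) i = q.2 ⟨i, hij⟩ := by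
    intro q; simp [Equiv.funSplitAt, Equiv.piSplitAt, dif_neg hij]
  simp only [h1, h2]
  rw [Fintype.sum_prod_type]
  have key : ∀ b : X, ∑ h : { k // k ≠ j } → X, g (h ⟨i, hij⟩) b
      = (Fintype.card X : ℝ) ^ (Fintype.card { k // k ≠ j } - 1) * ∑ a, g a b :=
    fun b => sum_eval (I := { k // k ≠ j }) (X := X) ⟨i, hij⟩ (fun a => g a b)
  simp only [key]
  have hc : Fintype.card { k // k ≠ j } = Fintype.card I - 1 := by
    have := Fintype.card_subtype_compl (fun k : I => k = j)
    simpa [Fintype.card_subtype_eq] using this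
  have h12 : Fintype.card I - 1 - 1 = Fintype.card I - 2 := by omega
  rw [hc, h12, ← Finset.mul_sum, Finset.sum_comm]

lemma rpow_form (x : ℝ) (hx : 0 < x) (y : ℝ) :
    x ^ y = (2:ℝ) ^ (Real.logb 2 x * y) := by
  rw [Real.rpow_mul (by norm_num), Real.rpow_logb (by norm_num) (by norm_num) hx]

noncomputable def Pw (n : ℕ) (p : ℝ) (e : Fin n → ZMod 2) : ℝ :=
  p ^ hammingNorm e * (1 - p) ^ (n - hammingNorm e)

noncomputable def errB (n M : ℕ) (p r : ℝ) (f : Fin M → (Fin n → ZMod 2)) (i : Fin M) : ℝ :=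
  ∑ e : Fin n → ZMod 2, Pw n p e *
    ((if ¬ ((hammingNorm e : ℝ) ≤ r * n) then 1 else 0) +
      ∑ j ∈ Finset.univ.erase i,
        (if ((hammingDist (f j) (f i + e) : ℝ)) ≤ r * n then (1:ℝ) else 0))

noncomputable def Bcard (n M : ℕ) (f : Fin M → (Fin n → ZMod 2)) : ℕ :=
  (Finset.univ.filter (fun i => ¬ ∀ j, f j = f i → j = i)).card

noncomputable def tailP (n : ℕ) (p r : ℝ) : ℝ :=
  ∑ e ∈ Finset.univ.filter
      (fun e : Fin n → ZMod 2 => ¬ ((hammingNorm e : ℝ) ≤ r * n)), Pw n p e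

noncomputable def Vol (n : ℕ) (r : ℝ) : ℕ :=
  (Finset.univ.filter (fun e : Fin n → ZMod 2 => (hammingNorm e : ℝ) ≤ r * n)).card

lemma sum_Pw (n : ℕ) (p : ℝ) : ∑ e : Fin n → ZMod 2, Pw n p e = 1 := by
  rw [show (1:ℝ) = (p + (1 - p)) ^ n by norm_num]
  exact sum_weight n p (1 - p)

lemma card_X (n : ℕ) : Fintype.card (Fin n → ZMod 2) = 2 ^ n := by
  rw [Fintype.card_fun, ZMod.card, Fintype.card_fin]

lemma cast_card_X (n : ℕ) : (Fintype.card (Fin n → ZMod 2) : ℝ) = (2:ℝ)^n := by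
  rw [card_X]; push_cast; ring

lemma vol_le (n : ℕ) (r : ℝ) (hr0 : 0 < r) (hr2 : r < 1/2) :
    ((Vol n r : ℕ) : ℝ) ≤ (2:ℝ) ^ (binEnt r * n) := by
  unfold Vol
  have hr1 : r < 1 := by linarith
  have h1r : 0 < 1 - r := by linarith
  set x : ℝ := r / (1 - r) with hxdef
  have hx0 : 0 < x := by positivity
  have hx1 : x ≤ 1 := by
    rw [div_le_one h1r]; linarith
  have key : ∀ e : Fin n → ZMod 2, (hammingNorm e : ℝ) ≤ r * n →
      (2:ℝ) ^ (-(binEnt r * n)) ≤ r ^ hammingNorm e * (1 - r) ^ (n - hammingNorm e) := by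
    intro e he
    have hkn : hammingNorm e ≤ n := by
      simpa using hammingNorm_le_card_fintype (x := e)
    have heq : r ^ hammingNorm e * (1 - r) ^ (n - hammingNorm e)
        = (1 - r) ^ n * x ^ hammingNorm e := by
      have : r ^ hammingNorm e = x ^ hammingNorm e * (1 - r) ^ hammingNorm e := by
        rw [← mul_pow, hxdef, div_mul_cancel₀ _ (ne_of_gt h1r)]
      rw [this, mul_assoc, ← pow_add]
      rw [Nat.add_sub_cancel' hkn]
      ring
    rw [heq]
    have hstep : x ^ (r * n) ≤ x ^ (hammingNorm e : ℝ) :=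
      Real.rpow_le_rpow_of_exponent_ge hx0 hx1 he
    have hxnat : x ^ (hammingNorm e : ℝ) = x ^ hammingNorm e := Real.rpow_natCast x _
    have hfinal : (2:ℝ) ^ (-(binEnt r * n)) = (1 - r) ^ n * x ^ (r * n) := by
      have e1 : ((1 - r) ^ n : ℝ) = (2:ℝ) ^ (Real.logb 2 (1 - r) * n) := by
        rw [← Real.rpow_natCast (1 - r) n, rpow_form _ h1r]
      have e2 : x ^ (r * n) = (2:ℝ) ^ (Real.logb 2 x * (r * n)) := rpow_form _ hx0 _
      rw [e1, e2, ← Real.rpow_add (by norm_num)]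
      congr 1
      have hlogx : Real.logb 2 x = Real.logb 2 r - Real.logb 2 (1 - r) :=
        Real.logb_div (ne_of_gt hr0) (ne_of_gt h1r)
      rw [hlogx]
      unfold binEnt
      ring
    rw [hfinal]
    calc (1 - r) ^ n * x ^ (r * n) ≤ (1 - r) ^ n * x ^ (hammingNorm e : ℝ) := by
          apply mul_le_mul_of_nonneg_left hstep (by positivity)
      _ = (1 - r) ^ n * x ^ hammingNorm e := by rw [hxnat]
  have hsum : ((Finset.univ.filter
        (fun e : Fin n → ZMod 2 => (hammingNorm e : ℝ) ≤ r * n)).card : ℝ)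
      * (2:ℝ) ^ (-(binEnt r * n)) ≤ 1 := by
    calc ((Finset.univ.filter
        (fun e : Fin n → ZMod 2 => (hammingNorm e : ℝ) ≤ r * n)).card : ℝ)
          * (2:ℝ) ^ (-(binEnt r * n))
        = ∑ _e ∈ Finset.univ.filter
            (fun e : Fin n → ZMod 2 => (hammingNorm e : ℝ) ≤ r * n),
            (2:ℝ) ^ (-(binEnt r * n)) := by rw [Finset.sum_const, nsmul_eq_mul]
      _ ≤ ∑ e ∈ Finset.univ.filter
            (fun e : Fin n → ZMod 2 => (hammingNorm e : ℝ) ≤ r * n),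
            r ^ hammingNorm e * (1 - r) ^ (n - hammingNorm e) := by
          apply Finset.sum_le_sum
          intro e he
          exact key e (Finset.mem_filter.mp he).2
      _ ≤ ∑ e : Fin n → ZMod 2, r ^ hammingNorm e * (1 - r) ^ (n - hammingNorm e) := by
          apply Finset.sum_le_sum_of_subset_of_nonneg (Finset.filter_subset _ _)
          intro e _ _
          positivity
      _ = 1 := by rw [sum_weight n r (1 - r)]; norm_num
  have hpos : (0:ℝ) < (2:ℝ) ^ (-(binEnt r * n)) := Real.rpow_pos_of_pos (by norm_num) _
  rw [← mul_le_mul_iff_left₀ hpos]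
  calc ((Finset.univ.filter
        (fun e : Fin n → ZMod 2 => (hammingNorm e : ℝ) ≤ r * n)).card : ℝ)
      * (2:ℝ) ^ (-(binEnt r * n)) ≤ 1 := hsum
    _ = (2:ℝ) ^ (binEnt r * n) * (2:ℝ) ^ (-(binEnt r * n)) := by
        rw [← Real.rpow_add (by norm_num)]; norm_num

lemma tail_bound (p r : ℝ) (hp : 0 < p) (hp1 : p < 1) (hpr : p < r) :
    ∃ c : ℝ, 0 ≤ c ∧ c < 1 ∧ ∀ n : ℕ, tailP n p r ≤ c ^ n := by
  set t : ℝ := (1 + r / p) / 2 with htdef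
  have hrp : 1 < r / p := (one_lt_div hp).mpr hpr
  have ht1 : 1 < t := by rw [htdef]; linarith
  have ht0 : 0 < t := by linarith
  have htrp : t < r / p := by rw [htdef]; linarith
  have hpt : p * t < r := by
    rw [← lt_div_iff₀' hp]; exact htrp
  set c : ℝ := (p * t + (1 - p)) * t ^ (-r) with hcdef
  have hbase : 0 < p * t + (1 - p) := by nlinarith
  have hc0 : 0 < c := by
    apply mul_pos hbase (Real.rpow_pos_of_pos ht0 _)
  refine ⟨c, le_of_lt hc0, ?_, ?_⟩
  · rw [← Real.log_neg_iff hc0, hcdef, Real.log_mul (ne_of_gt hbase)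
      (ne_of_gt (Real.rpow_pos_of_pos ht0 _)), Real.log_rpow ht0]
    have h1 : Real.log (p * t + (1 - p)) ≤ p * (t - 1) := by
      have := Real.log_le_sub_one_of_pos hbase
      linarith
    have h2 : 1 - t⁻¹ ≤ Real.log t := by
      have := Real.log_le_sub_one_of_pos (inv_pos.mpr ht0)
      rw [Real.log_inv] at this
      linarith
    have h3 : p * (t - 1) < r * (1 - t⁻¹) := by
      have key : p * t * (t - 1) < r * (t - 1) := by nlinarith
      have hrr : r * (1 - t⁻¹) = r * (t - 1) / t := by field_simp
      rw [hrr, lt_div_iff₀ ht0]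
      nlinarith [key]
    nlinarith [mul_le_mul_of_nonneg_left h2 (le_of_lt (lt_trans hp hpr))]
  · intro n
    unfold tailP Pw
    have hterm : ∀ e : Fin n → ZMod 2, ¬ ((hammingNorm e : ℝ) ≤ r * n) →
        p ^ hammingNorm e * (1 - p) ^ (n - hammingNorm e)
          ≤ (p * t) ^ hammingNorm e * (1 - p) ^ (n - hammingNorm e) * t ^ (-(r * n)) := by
      intro e he
      push_neg at he
      have hfac : (1:ℝ) ≤ t ^ ((hammingNorm e : ℝ) - r * n) := by
        apply Real.one_le_rpow (le_of_lt ht1) (by linarith)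
      have ht' : t ^ ((hammingNorm e : ℝ) - r * n)
          = t ^ hammingNorm e * t ^ (-(r * n)) := by
        rw [sub_eq_add_neg, Real.rpow_add ht0, Real.rpow_natCast]
      have hnn : (0:ℝ) ≤ p ^ hammingNorm e * (1 - p) ^ (n - hammingNorm e) :=
        mul_nonneg (pow_nonneg hp.le _) (pow_nonneg (by linarith) _)
      calc p ^ hammingNorm e * (1 - p) ^ (n - hammingNorm e)
          ≤ p ^ hammingNorm e * (1 - p) ^ (n - hammingNorm e)
            * (t ^ hammingNorm e * t ^ (-(r * n))) := by
            nlinarith [hfac, ht', hnn]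
        _ = (p * t) ^ hammingNorm e * (1 - p) ^ (n - hammingNorm e) * t ^ (-(r * n)) := by
            rw [mul_pow]; ring
    calc ∑ e ∈ Finset.univ.filter
          (fun e : Fin n → ZMod 2 => ¬ ((hammingNorm e : ℝ) ≤ r * n)),
          p ^ hammingNorm e * (1 - p) ^ (n - hammingNorm e)
        ≤ ∑ e ∈ Finset.univ.filter
          (fun e : Fin n → ZMod 2 => ¬ ((hammingNorm e : ℝ) ≤ r * n)),
          (p * t) ^ hammingNorm e * (1 - p) ^ (n - hammingNorm e) * t ^ (-(r * n)) := by
          apply Finset.sum_le_sum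
          intro e he
          exact hterm e (Finset.mem_filter.mp he).2
      _ ≤ ∑ e : Fin n → ZMod 2,
          (p * t) ^ hammingNorm e * (1 - p) ^ (n - hammingNorm e) * t ^ (-(r * n)) := by
          apply Finset.sum_le_sum_of_subset_of_nonneg (Finset.filter_subset _ _)
          intro e _ _
          have h5 : (0:ℝ) < t ^ (-(r * n)) := Real.rpow_pos_of_pos ht0 _
          exact mul_nonneg (mul_nonneg (pow_nonneg (by nlinarith) _)
            (pow_nonneg (by linarith) _)) h5.le
      _ = (p * t + (1 - p)) ^ n * t ^ (-(r * n)) := by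
          rw [← Finset.sum_mul, sum_weight]
      _ = c ^ n := by
          rw [hcdef, mul_pow, ← Real.rpow_natCast (t ^ (-r)) n, ← Real.rpow_mul (le_of_lt ht0)]
          ring_nf

lemma ball_count (n : ℕ) (r : ℝ) (c : Fin n → ZMod 2) :
    ∑ b : Fin n → ZMod 2, (if ((hammingDist b c : ℝ)) ≤ r * n then (1:ℝ) else 0)
      = Vol n r := by
  classical
  rw [← Equiv.sum_comp (Equiv.addRight c)
    (fun b => if ((hammingDist b c : ℝ)) ≤ r * n then (1:ℝ) else 0)]
  have h : ∀ w : Fin n → ZMod 2, hammingDist (Equiv.addRight c w) c = hammingNorm w := by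
    intro w
    rw [hammingDist_eq_hammingNorm]
    simp
    simp [hammingNorm]
  simp only [h]
  rw [Vol, Finset.sum_boole]

lemma sum_f_errB (n M : ℕ) (hM : 2 ≤ M) (p r : ℝ) (i : Fin M) :
    ∑ f : Fin M → (Fin n → ZMod 2), errB n M p r f i
      = ((2:ℝ)^n)^M * (tailP n p r + ((M:ℝ) - 1) * (Vol n r) * ((2:ℝ)^n)⁻¹) := by
  classical
  unfold errB
  rw [Finset.sum_comm]
  have inner : ∀ e : Fin n → ZMod 2,
      (∑ f : Fin M → (Fin n → ZMod 2), Pw n p e *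
        ((if ¬ ((hammingNorm e : ℝ) ≤ r * n) then 1 else 0) +
          ∑ j ∈ Finset.univ.erase i,
            (if ((hammingDist (f j) (f i + e) : ℝ)) ≤ r * n then (1:ℝ) else 0)))
      = Pw n p e * (((2:ℝ)^n)^M * (if ¬ ((hammingNorm e : ℝ) ≤ r * n) then 1 else 0)
          + ((M:ℝ) - 1) * ((2:ℝ)^n)^(M-1) * (Vol n r)) := by
    intro e
    rw [← Finset.mul_sum]
    congr 1
    rw [Finset.sum_add_distrib, Finset.sum_const]
    congr 1
    · rw [Finset.card_univ, Fintype.card_fun, card_X, Fintype.card_fin, nsmul_eq_mul]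
      push_cast
      rfl
    · rw [Finset.sum_comm]
      have hj : ∀ j ∈ Finset.univ.erase i,
          (∑ f : Fin M → (Fin n → ZMod 2),
            (if ((hammingDist (f j) (f i + e) : ℝ)) ≤ r * n then (1:ℝ) else 0))
          = ((2:ℝ)^n)^(M-1) * (Vol n r) := by
        intro j hj
        have hij : i ≠ j := (Finset.mem_erase.mp hj).1.symm
        have := sum_eval_pair (X := Fin n → ZMod 2) hij
          (fun a b => if ((hammingDist b (a + e) : ℝ)) ≤ r * n then (1:ℝ) else 0)
        rw [this]
        have hab : ∀ a : Fin n → ZMod 2,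
            (∑ b : Fin n → ZMod 2,
              if ((hammingDist b (a + e) : ℝ)) ≤ r * n then (1:ℝ) else 0)
            = (Vol n r : ℝ) := fun a => ball_count n r (a + e)
        rw [Finset.sum_congr rfl (fun a _ => hab a), Finset.sum_const, Finset.card_univ,
          nsmul_eq_mul, cast_card_X, Fintype.card_fin, ← mul_assoc]
        have hM2 : ((2:ℝ)^n) ^ (M-2) * ((2:ℝ)^n) = ((2:ℝ)^n) ^ (M-1) := by
          rw [← pow_succ]; congr 1; omega
        rw [hM2]
      rw [Finset.sum_congr rfl hj, Finset.sum_const, Finset.card_erase_of_mem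
        (Finset.mem_univ i), Finset.card_univ, Fintype.card_fin, nsmul_eq_mul]
      have : ((M - 1 : ℕ) : ℝ) = (M:ℝ) - 1 := by
        have : 1 ≤ M := by omega
        push_cast [this]
        ring
      rw [this, mul_assoc]
  rw [Finset.sum_congr rfl (fun e _ => inner e)]
  have expand : ∀ e : Fin n → ZMod 2,
      Pw n p e * (((2:ℝ)^n)^M * (if ¬ ((hammingNorm e : ℝ) ≤ r * n) then 1 else 0)
          + ((M:ℝ) - 1) * ((2:ℝ)^n)^(M-1) * (Vol n r))
      = ((2:ℝ)^n)^M * (if ¬ ((hammingNorm e : ℝ) ≤ r * n) then Pw n p e else 0)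
          + ((M:ℝ) - 1) * ((2:ℝ)^n)^(M-1) * (Vol n r) * Pw n p e := by
    intro e
    by_cases h : ¬ ((hammingNorm e : ℝ) ≤ r * n) <;> simp [h] <;> ring
  rw [Finset.sum_congr rfl (fun e _ => expand e), Finset.sum_add_distrib,
    ← Finset.mul_sum, ← Finset.mul_sum, sum_Pw, mul_one, ← Finset.sum_filter]
  have hpow : ((2:ℝ)^n)^(M-1) = ((2:ℝ)^n)^M * ((2:ℝ)^n)⁻¹ := by
    have h2 : ((2:ℝ)^n) ≠ 0 := by positivity
    field_simp
    rw [← pow_succ']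
    congr 1
    omega
  rw [hpow]
  unfold tailP
  ring

lemma sum_f_Bcard (n M : ℕ) (hM : 2 ≤ M) :
    ∑ f : Fin M → (Fin n → ZMod 2), (Bcard n M f : ℝ)
      ≤ ((2:ℝ)^n)^M * (M * (((M:ℝ) - 1) * ((2:ℝ)^n)⁻¹)) := by
  classical
  have hpt : ∀ f : Fin M → (Fin n → ZMod 2), (Bcard n M f : ℝ)
      ≤ ∑ i : Fin M, ∑ j ∈ Finset.univ.erase i,
          (if f j = f i then (1:ℝ) else 0) := by
    intro f
    unfold Bcard
    rw [← Finset.sum_boole]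
    apply Finset.sum_le_sum
    intro i _
    by_cases h : ∀ j, f j = f i → j = i
    · rw [if_neg (not_not_intro h)]
      apply Finset.sum_nonneg
      intro j _
      positivity
    · rw [if_pos h]
      push_neg at h
      obtain ⟨j, hfj, hji⟩ := h
      calc (1:ℝ) = if f j = f i then (1:ℝ) else 0 := by rw [if_pos hfj]
        _ ≤ ∑ j' ∈ Finset.univ.erase i, (if f j' = f i then (1:ℝ) else 0) := by
            apply Finset.single_le_sum (f := fun j' => if f j' = f i then (1:ℝ) else 0)
            · intro j' _; positivity
            · exact Finset.mem_erase.mpr ⟨hji, Finset.mem_univ j⟩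
  calc ∑ f : Fin M → (Fin n → ZMod 2), (Bcard n M f : ℝ)
      ≤ ∑ f : Fin M → (Fin n → ZMod 2), ∑ i : Fin M, ∑ j ∈ Finset.univ.erase i,
          (if f j = f i then (1:ℝ) else 0) := Finset.sum_le_sum (fun f _ => hpt f)
    _ = ∑ i : Fin M, ∑ j ∈ Finset.univ.erase i, ∑ f : Fin M → (Fin n → ZMod 2),
          (if f j = f i then (1:ℝ) else 0) := by
        rw [Finset.sum_comm]
        apply Finset.sum_congr rfl
        intro i _
        rw [Finset.sum_comm]
    _ ≤ ((2:ℝ)^n)^M * (M * (((M:ℝ) - 1) * ((2:ℝ)^n)⁻¹)) := by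
        have hjf : ∀ i : Fin M, ∀ j ∈ Finset.univ.erase i,
            ∑ f : Fin M → (Fin n → ZMod 2), (if f j = f i then (1:ℝ) else 0)
            = ((2:ℝ)^n)^(M-1) := by
          intro i j hj
          have hij : i ≠ j := (Finset.mem_erase.mp hj).1.symm
          have := sum_eval_pair (X := Fin n → ZMod 2) hij
            (fun a b => if b = a then (1:ℝ) else 0)
          rw [this]
          simp only [Finset.sum_ite_eq', Finset.mem_univ, if_true]
          rw [Finset.sum_const, Finset.card_univ, nsmul_eq_mul, mul_one,
            cast_card_X, Fintype.card_fin]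
          have hM2 : ((2:ℝ)^n) ^ (M-2) * ((2:ℝ)^n) = ((2:ℝ)^n) ^ (M-1) := by
            rw [← pow_succ]; congr 1; omega
          rw [hM2]
        rw [Finset.sum_congr rfl (fun i _ => Finset.sum_congr rfl (hjf i))]
        simp only [Finset.sum_const, Finset.card_erase_of_mem (Finset.mem_univ _),
          Finset.card_univ, Fintype.card_fin, nsmul_eq_mul]
        have h1 : ((M - 1 : ℕ) : ℝ) = (M:ℝ) - 1 := by
          have : 1 ≤ M := by omega
          push_cast [this]; ring
        have hpow : ((2:ℝ)^n)^(M-1) = ((2:ℝ)^n)^M * ((2:ℝ)^n)⁻¹ := by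
          have h2 : ((2:ℝ)^n) ≠ 0 := by positivity
          field_simp
          rw [← pow_succ']
          congr 1
          omega
        rw [h1, hpow]
        ring_nf
        apply le_refl

lemma exists_good (n M : ℕ) (hM : 2 ≤ M) (p r : ℝ) :
    ∃ f : Fin M → (Fin n → ZMod 2),
      (∑ i : Fin M, errB n M p r f i) + (Bcard n M f : ℝ)
        ≤ M * (tailP n p r + ((M:ℝ) - 1) * (Vol n r) * ((2:ℝ)^n)⁻¹
            + ((M:ℝ) - 1) * ((2:ℝ)^n)⁻¹) := by
  classical
  set target : ℝ := M * (tailP n p r + ((M:ℝ) - 1) * (Vol n r) * ((2:ℝ)^n)⁻¹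
            + ((M:ℝ) - 1) * ((2:ℝ)^n)⁻¹) with htarget
  have hsum : ∑ f : Fin M → (Fin n → ZMod 2),
      ((∑ i : Fin M, errB n M p r f i) + (Bcard n M f : ℝ))
      ≤ ∑ _f : Fin M → (Fin n → ZMod 2), target := by
    rw [Finset.sum_add_distrib, Finset.sum_comm]
    have h1 : ∑ i : Fin M, ∑ f : Fin M → (Fin n → ZMod 2), errB n M p r f i
        = ((2:ℝ)^n)^M * (M * (tailP n p r + ((M:ℝ) - 1) * (Vol n r) * ((2:ℝ)^n)⁻¹)) := by
      rw [Finset.sum_congr rfl (fun i _ => sum_f_errB n M hM p r i), Finset.sum_const,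
        Finset.card_univ, Fintype.card_fin, nsmul_eq_mul]
      ring
    rw [h1, Finset.sum_const, Finset.card_univ, Fintype.card_fun, card_X,
      Fintype.card_fin, nsmul_eq_mul, htarget]
    have h3 := sum_f_Bcard n M hM
    have h4 : (0:ℝ) ≤ ((2:ℝ)^n)^M := by positivity
    calc ((2:ℝ)^n)^M * (M * (tailP n p r + ((M:ℝ) - 1) * (Vol n r) * ((2:ℝ)^n)⁻¹))
          + ∑ f : Fin M → (Fin n → ZMod 2), (Bcard n M f : ℝ)
        ≤ ((2:ℝ)^n)^M * (M * (tailP n p r + ((M:ℝ) - 1) * (Vol n r) * ((2:ℝ)^n)⁻¹))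
          + ((2:ℝ)^n)^M * (M * (((M:ℝ) - 1) * ((2:ℝ)^n)⁻¹)) := by linarith
      _ = ((((2^n)^M : ℕ)) : ℝ) * (M * (tailP n p r + ((M:ℝ) - 1) * (Vol n r) * ((2:ℝ)^n)⁻¹
            + ((M:ℝ) - 1) * ((2:ℝ)^n)⁻¹)) := by push_cast; ring
  obtain ⟨f, _, hf⟩ := Finset.exists_le_of_sum_le (Finset.univ_nonempty) hsum
  exact ⟨f, hf⟩

noncomputable def decoder (n : ℕ) (r : ℝ) (Cn : Finset (Fin n → ZMod 2))
    (h : Cn.Nonempty) (v : Fin n → ZMod 2) : Fin n → ZMod 2 :=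
  if hu : ∃ u, Cn.filter (fun w => (hammingDist w v : ℝ) ≤ r * n) = {u} then
    hu.choose else h.choose

lemma decoder_mem (n : ℕ) (r : ℝ) (Cn : Finset (Fin n → ZMod 2))
    (h : Cn.Nonempty) (v : Fin n → ZMod 2) : decoder n r Cn h v ∈ Cn := by
  unfold decoder
  split_ifs with hu
  · have hspec := hu.choose_spec
    have hmem : hu.choose ∈ ({hu.choose} : Finset (Fin n → ZMod 2)) :=
      Finset.mem_singleton_self _
    rw [← hspec] at hmem
    exact (Finset.mem_filter.mp hmem).1
  · exact h.choose_spec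

lemma dist_self_add (n : ℕ) (u e : Fin n → ZMod 2) :
    hammingDist u (u + e) = hammingNorm e := by
  rw [hammingDist_eq_hammingNorm]
  unfold hammingNorm
  congr 1
  ext i
  simp [← add_assoc, CharTwo.add_self_eq_zero]

lemma decoder_correct (n : ℕ) (r : ℝ) (Cn : Finset (Fin n → ZMod 2))
    (h : Cn.Nonempty) (u : Fin n → ZMod 2) (hu : u ∈ Cn) (e : Fin n → ZMod 2)
    (hwt : (hammingNorm e : ℝ) ≤ r * n)
    (hfar : ∀ w ∈ Cn, w ≠ u → ¬ ((hammingDist w (u + e) : ℝ) ≤ r * n)) :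
    decoder n r Cn h (u + e) = u := by
  have hfil : Cn.filter (fun w => (hammingDist w (u + e) : ℝ) ≤ r * n) = {u} := by
    ext w
    simp only [Finset.mem_filter, Finset.mem_singleton]
    constructor
    · rintro ⟨hw, hd⟩
      by_contra hne
      exact hfar w hw hne hd
    · rintro rfl
      refine ⟨hu, ?_⟩
      rw [dist_self_add]
      exact hwt
  unfold decoder
  have hex : ∃ u', Cn.filter (fun w => (hammingDist w (u + e) : ℝ) ≤ r * n) = {u'} :=
    ⟨u, hfil⟩
  rw [dif_pos hex]
  have hspec := hex.choose_spec
  have heq : ({u} : Finset (Fin n → ZMod 2)) = {hex.choose} := hfil.symm.trans hspec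
  exact (Finset.singleton_injective heq).symm

lemma rpow_combine (u v : ℝ) (n : ℕ) :
    (2:ℝ)^(u * n) * (2:ℝ)^(v * n) * ((2:ℝ)^n)⁻¹ = (2:ℝ)^((u + v - 1) * n) := by
  rw [← Real.rpow_natCast (2:ℝ) n, ← Real.rpow_neg (by norm_num),
    ← Real.rpow_add (by norm_num : (0:ℝ) < 2), ← Real.rpow_add (by norm_num : (0:ℝ) < 2)]
  congr 1
  ring

lemma rpow_pow (s : ℝ) (n : ℕ) : ((2:ℝ) ^ s) ^ n = (2:ℝ) ^ (s * n) := by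
  rw [← Real.rpow_natCast ((2:ℝ)^s) n, ← Real.rpow_mul (by norm_num)]

lemma errB_nonneg (n M : ℕ) (p r : ℝ) (hp0 : 0 ≤ p) (hp1 : p ≤ 1)
    (f : Fin M → (Fin n → ZMod 2)) (i : Fin M) : 0 ≤ errB n M p r f i := by
  apply Finset.sum_nonneg
  intro e _
  apply mul_nonneg
  · exact mul_nonneg (pow_nonneg hp0 _) (pow_nonneg (by linarith) _)
  · apply add_nonneg
    · positivity
    · apply Finset.sum_nonneg; intro j _; positivity

set_option maxHeartbeats 1000000 in
/-- Shannon's noisy channel coding theorem for the binary symmetric channel with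
crossover probability `0 < p < 1/2`: for every `δ > 0` and every positive rate
`ρ < C = 1 - h₂(p)`, for all sufficiently large `n` there are a code
`C_n ⊆ (Fin n → ZMod 2)` of size at least `2^(ρ n)` and a decoder `D` with values in
`C_n` whose average probability of correct decoding exceeds `1 - δ`. -/
theorem stmt_6 (p : ℝ) (hp : 0 < p) (hp2 : p < 1/2)
    (δ : ℝ) (hδ : 0 < δ) (ρ : ℝ) (hρ : 0 < ρ) (hρC : ρ < 1 - binEnt p) :
    ∃ N : ℕ, ∀ n ≥ N,
      ∃ (Cn : Finset (Fin n → ZMod 2)) (D : (Fin n → ZMod 2) → (Fin n → ZMod 2)),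
        (∀ v, D v ∈ Cn) ∧
        (2 : ℝ) ^ (ρ * n) ≤ Cn.card ∧
        (1 / (Cn.card : ℝ)) *
            ∑ u ∈ Cn, ∑ e : Fin n → ZMod 2,
              p ^ hammingNorm e * (1 - p) ^ (n - hammingNorm e) *
                (if D (u + e) = u then 1 else 0)
          > 1 - δ := by
  classical
  have hp1 : p < 1 := by linarith
  set δ₀ : ℝ := min δ 1 with hδ₀def
  have hδ₀pos : 0 < δ₀ := lt_min hδ one_pos
  have hδ₀le : δ₀ ≤ δ := min_le_left _ _
  have hδ₀1 : δ₀ ≤ 1 := min_le_right _ _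
  set ρ' : ℝ := (ρ + (1 - binEnt p)) / 2 with hρ'def
  have hρρ' : ρ < ρ' := by rw [hρ'def]; linarith
  have hρ'C : ρ' < 1 - binEnt p := by rw [hρ'def]; linarith
  have hρ'pos : 0 < ρ' := lt_trans hρ hρρ'
  -- continuity of binEnt at p, to choose r
  have hcont : ContinuousAt binEnt p := by
    unfold binEnt
    apply ContinuousAt.sub
    · apply ContinuousAt.neg
      exact continuousAt_id.mul (Real.continuousAt_logb (ne_of_gt hp))
    · apply ContinuousAt.mul
      · exact (continuous_const.sub continuous_id).continuousAt
      · exact ContinuousAt.comp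
          (Real.continuousAt_logb (by intro hc; rw [sub_eq_zero] at hc; linarith))
          ((continuous_const.sub continuous_id).continuousAt)
  have hlt : binEnt p < 1 - ρ' := by linarith
  have hev : ∀ᶠ x in nhds p, binEnt x < 1 - ρ' := hcont.eventually_lt_const hlt
  obtain ⟨ε, hεpos, hε⟩ := Metric.eventually_nhds_iff.mp hev
  set r : ℝ := min (p + ε/2) ((p + 1/2)/2) with hrdef
  have hrp : p < r := lt_min (by linarith) (by linarith)
  have hr2 : r < 1/2 := lt_of_le_of_lt (min_le_right _ _) (by linarith)
  have hr0 : 0 < r := lt_trans hp hrp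
  have hEntr : binEnt r < 1 - ρ' := by
    apply hε
    rw [Real.dist_eq, abs_of_pos (by linarith)]
    have : r ≤ p + ε/2 := min_le_left _ _
    linarith
  have hEnt0 : 0 ≤ binEnt r := by
    unfold binEnt
    have h1 : Real.logb 2 r ≤ 0 :=
      Real.logb_nonpos (by norm_num) hr0.le (by linarith)
    have h2 : Real.logb 2 (1 - r) ≤ 0 :=
      Real.logb_nonpos (by norm_num) (by linarith) (by linarith)
    nlinarith
  have hρ'1 : ρ' < 1 := by linarith
  set a : ℝ := (2:ℝ) ^ (ρ' + binEnt r - 1) with hadef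
  have ha0 : 0 < a := Real.rpow_pos_of_pos (by norm_num) _
  have ha1 : a < 1 := Real.rpow_lt_one_of_one_lt_of_neg (by norm_num) (by linarith)
  set b : ℝ := (2:ℝ) ^ (ρ' - 1) with hbdef
  have hb0 : 0 < b := Real.rpow_pos_of_pos (by norm_num) _
  have hb1 : b < 1 := Real.rpow_lt_one_of_one_lt_of_neg (by norm_num) (by linarith)
  obtain ⟨c, hc0, hc1, hctail⟩ := tail_bound p r hp hp1 hrp
  -- choose N by asymptotics
  have htend : Filter.Tendsto (fun n : ℕ => c^n + 4*a^n + 4*b^n)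
      Filter.atTop (nhds 0) := by
    have t1 := tendsto_pow_atTop_nhds_zero_of_lt_one hc0 hc1
    have t2 := (tendsto_pow_atTop_nhds_zero_of_lt_one ha0.le ha1).const_mul (4:ℝ)
    have t3 := (tendsto_pow_atTop_nhds_zero_of_lt_one hb0.le hb1).const_mul (4:ℝ)
    have := (t1.add t2).add t3
    simpa using this
  have hev2 : ∀ᶠ n : ℕ in Filter.atTop, c^n + 4*a^n + 4*b^n < δ₀/4 :=
    htend.eventually_lt_const (by positivity)
  obtain ⟨N, hN⟩ := Filter.eventually_atTop.mp hev2
  refine ⟨N, fun n hn => ?_⟩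
  -- set up M
  set M : ℕ := 2 * ⌈(2:ℝ) ^ (ρ' * n)⌉₊ with hMdef
  have hx1 : (1:ℝ) ≤ (2:ℝ) ^ (ρ' * n) :=
    Real.one_le_rpow (by norm_num) (by positivity)
  have hceil1 : 1 ≤ ⌈(2:ℝ) ^ (ρ' * n)⌉₊ := by
    rw [Nat.one_le_ceil_iff]; positivity
  have hM2 : 2 ≤ M := by omega
  have hMle : (M:ℝ) ≤ 4 * (2:ℝ)^(ρ' * n) := by
    have h := Nat.ceil_lt_add_one (by positivity : (0:ℝ) ≤ (2:ℝ)^(ρ' * n))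
    rw [hMdef]
    push_cast
    linarith
  have hMge : (2:ℝ)^(ρ' * n) ≤ (M:ℝ)/2 := by
    have := Nat.le_ceil ((2:ℝ)^(ρ' * n))
    rw [hMdef]
    push_cast
    linarith
  have hMpos : (0:ℝ) < M := by positivity
  obtain ⟨f, hf⟩ := exists_good n M hM2 p r
  -- bound the expectation
  have hVol := vol_le n r hr0 hr2
  have htail := hctail n
  have hinvpos : (0:ℝ) < ((2:ℝ)^n)⁻¹ := by positivity
  have key2 : ((M:ℝ) - 1) * (Vol n r) * ((2:ℝ)^n)⁻¹ ≤ 4 * a^n := by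
    have hM1 : (M:ℝ) - 1 ≤ 4 * (2:ℝ)^(ρ' * n) := by linarith
    have hM1' : (0:ℝ) ≤ (M:ℝ) - 1 := by
      have : (2:ℝ) ≤ M := by exact_mod_cast hM2
      linarith
    calc ((M:ℝ) - 1) * (Vol n r) * ((2:ℝ)^n)⁻¹
        ≤ (4 * (2:ℝ)^(ρ' * n)) * ((2:ℝ) ^ (binEnt r * n)) * ((2:ℝ)^n)⁻¹ := by
          apply mul_le_mul_of_nonneg_right _ hinvpos.le
          apply mul_le_mul hM1 hVol (Nat.cast_nonneg _) (by positivity)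
      _ = 4 * a^n := by
          rw [hadef, rpow_pow]
          rw [show (4 * (2:ℝ)^(ρ' * n)) * ((2:ℝ) ^ (binEnt r * n)) * ((2:ℝ)^n)⁻¹
            = 4 * ((2:ℝ)^(ρ' * n) * (2:ℝ) ^ (binEnt r * n) * ((2:ℝ)^n)⁻¹) by ring]
          rw [rpow_combine]
  have key3 : ((M:ℝ) - 1) * ((2:ℝ)^n)⁻¹ ≤ 4 * b^n := by
    have hM1 : (M:ℝ) - 1 ≤ 4 * (2:ℝ)^(ρ' * n) := by linarith
    calc ((M:ℝ) - 1) * ((2:ℝ)^n)⁻¹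
        ≤ (4 * (2:ℝ)^(ρ' * n)) * ((2:ℝ)^n)⁻¹ :=
          mul_le_mul_of_nonneg_right hM1 hinvpos.le
      _ = 4 * b^n := by
          rw [hbdef, rpow_pow]
          have h1 : (2:ℝ)^(ρ' * n) * (2:ℝ)^((0:ℝ) * n) * ((2:ℝ)^n)⁻¹
              = (2:ℝ)^((ρ' + 0 - 1) * n) := rpow_combine ρ' 0 n
          rw [show ((0:ℝ) * n) = 0 by ring, Real.rpow_zero, mul_one] at h1
          rw [show ((ρ' + 0 - 1) * n) = (ρ' - 1) * n by ring] at h1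
          rw [mul_assoc, h1]
  have hEB : (∑ i : Fin M, errB n M p r f i) + (Bcard n M f : ℝ)
      ≤ (M:ℝ) * (δ₀/4) := by
    have hη : tailP n p r + ((M:ℝ) - 1) * (Vol n r) * ((2:ℝ)^n)⁻¹
        + ((M:ℝ) - 1) * ((2:ℝ)^n)⁻¹ ≤ c^n + 4*a^n + 4*b^n := by linarith
    have hδn := hN n hn
    calc (∑ i : Fin M, errB n M p r f i) + (Bcard n M f : ℝ)
        ≤ (M:ℝ) * (tailP n p r + ((M:ℝ) - 1) * (Vol n r) * ((2:ℝ)^n)⁻¹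
            + ((M:ℝ) - 1) * ((2:ℝ)^n)⁻¹) := hf
      _ ≤ (M:ℝ) * (c^n + 4*a^n + 4*b^n) := by
          apply mul_le_mul_of_nonneg_left hη hMpos.le
      _ ≤ (M:ℝ) * (δ₀/4) := by
          apply mul_le_mul_of_nonneg_left hδn.le hMpos.le
  have herrnn : ∀ i : Fin M, 0 ≤ errB n M p r f i :=
    errB_nonneg n M p r hp.le hp1.le f
  have hsum_err : ∑ i : Fin M, errB n M p r f i ≤ (M:ℝ) * (δ₀/4) := by
    have : (0:ℝ) ≤ (Bcard n M f : ℝ) := Nat.cast_nonneg _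
    linarith
  have hBle : (Bcard n M f : ℝ) ≤ (M:ℝ) * (δ₀/4) := by
    have : (0:ℝ) ≤ ∑ i : Fin M, errB n M p r f i := Finset.sum_nonneg fun i _ => herrnn i
    linarith
  -- build the code
  set I : Finset (Fin M) := Finset.univ.filter (fun i => ∀ j, f j = f i → j = i)
    with hIdef
  set Cn : Finset (Fin n → ZMod 2) := I.image f with hCndef
  have hinjI : Set.InjOn f ↑I := by
    intro i hi i' hi' heq
    have hi'' := (Finset.mem_filter.mp hi').2
    exact hi'' i heq
  have hcardCn : Cn.card = I.card := Finset.card_image_of_injOn hinjI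
  have hIB : I.card + Bcard n M f = M := by
    rw [hIdef]
    unfold Bcard
    rw [Finset.card_filter_add_card_filter_not, Finset.card_univ,
      Fintype.card_fin]
  have hIcard : (I.card : ℝ) = (M:ℝ) - (Bcard n M f : ℝ) := by
    have := hIB
    push_cast [← this]
    ring
  have hIhalf : (M:ℝ)/2 ≤ (I.card : ℝ) := by
    rw [hIcard]
    have h9 : (M:ℝ) * (δ₀/4) ≤ (M:ℝ) * (1/4) :=
      mul_le_mul_of_nonneg_left (by linarith) hMpos.le
    linarith
  have hCge : (2:ℝ)^(ρ * n) ≤ (Cn.card : ℝ) := by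
    rw [hcardCn]
    have h1 : (2:ℝ)^(ρ * n) ≤ (2:ℝ)^(ρ' * n) := by
      apply Real.rpow_le_rpow_of_exponent_le (by norm_num)
      exact mul_le_mul_of_nonneg_right hρρ'.le (Nat.cast_nonneg n)
    linarith
  have hCnpos : 0 < Cn.card := by
    rcases Nat.eq_zero_or_pos Cn.card with h | h
    · exfalso
      rw [h] at hCge
      norm_num at hCge
      have : (0:ℝ) < (2:ℝ)^(ρ * n) := Real.rpow_pos_of_pos (by norm_num) _
      linarith
    · exact h
  have hCnon : Cn.Nonempty := Finset.card_pos.mp hCnpos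
  set D := decoder n r Cn hCnon with hDdef
  refine ⟨Cn, D, fun v => decoder_mem n r Cn hCnon v, hCge, ?_⟩
  -- correctness of decoding for each non-colliding message
  have hcorrect : ∀ i ∈ I, (1:ℝ) - errB n M p r f i
      ≤ ∑ e : Fin n → ZMod 2, Pw n p e * (if D (f i + e) = f i then 1 else 0) := by
    intro i hi
    have hfiCn : f i ∈ Cn := Finset.mem_image_of_mem f hi
    have hpoint : ∀ e : Fin n → ZMod 2,
        Pw n p e * (1 - ((if ¬ ((hammingNorm e : ℝ) ≤ r * n) then 1 else 0) +
          ∑ j ∈ Finset.univ.erase i,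
            (if ((hammingDist (f j) (f i + e) : ℝ)) ≤ r * n then (1:ℝ) else 0)))
        ≤ Pw n p e * (if D (f i + e) = f i then 1 else 0) := by
      intro e
      have hPw0 : 0 ≤ Pw n p e :=
        mul_nonneg (pow_nonneg hp.le _) (pow_nonneg (by linarith) _)
      set T : ℝ := (if ¬ ((hammingNorm e : ℝ) ≤ r * n) then (1:ℝ) else 0) with hT
      set S : ℝ := ∑ j ∈ Finset.univ.erase i,
            (if ((hammingDist (f j) (f i + e) : ℝ)) ≤ r * n then (1:ℝ) else 0) with hS
      have hT0 : 0 ≤ T := by rw [hT]; positivity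
      have hS0 : 0 ≤ S := by
        rw [hS]; apply Finset.sum_nonneg; intro j _; positivity
      by_cases h1 : (hammingNorm e : ℝ) ≤ r * n
      · by_cases h2 : ∀ j ∈ Finset.univ.erase i,
            ¬ ((hammingDist (f j) (f i + e) : ℝ) ≤ r * n)
        · have hD : D (f i + e) = f i := by
            rw [hDdef]
            apply decoder_correct n r Cn hCnon (f i) hfiCn e h1
            intro w hw hne
            obtain ⟨j, hjI, hfj⟩ := Finset.mem_image.mp hw
            have hji : j ≠ i := by
              intro hcon
              rw [hcon] at hfj
              exact hne hfj.symm
            rw [← hfj]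
            exact h2 j (Finset.mem_erase.mpr ⟨hji, Finset.mem_univ j⟩)
          rw [hD, if_pos rfl, mul_one]
          have : 1 - (T + S) ≤ 1 := by linarith
          exact mul_le_mul_of_nonneg_left this hPw0 |>.trans_eq (mul_one _)
        · push_neg at h2
          obtain ⟨j, hj, hd⟩ := h2
          have hS1 : (1:ℝ) ≤ S := by
            rw [hS]
            calc (1:ℝ) = if ((hammingDist (f j) (f i + e) : ℝ)) ≤ r * n then (1:ℝ)
                else 0 := by rw [if_pos hd]
              _ ≤ _ := by
                  apply Finset.single_le_sum
                    (f := fun j' => if ((hammingDist (f j') (f i + e) : ℝ)) ≤ r * n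
                      then (1:ℝ) else 0)
                  · intro j' _; positivity
                  · exact hj
          have hle0 : Pw n p e * (1 - (T + S)) ≤ 0 :=
            mul_nonpos_of_nonneg_of_nonpos hPw0 (by linarith)
          have hind : (0:ℝ) ≤ (if D (f i + e) = f i then (1:ℝ) else 0) := by
            split_ifs <;> norm_num
          have : (0:ℝ) ≤ Pw n p e * (if D (f i + e) = f i then 1 else 0) :=
            mul_nonneg hPw0 hind
          linarith
      · have hT1 : T = 1 := by rw [hT, if_pos h1]
        have hle0 : Pw n p e * (1 - (T + S)) ≤ 0 :=
          mul_nonpos_of_nonneg_of_nonpos hPw0 (by rw [hT1]; linarith)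
        have hind : (0:ℝ) ≤ (if D (f i + e) = f i then (1:ℝ) else 0) := by
          split_ifs <;> norm_num
        have : (0:ℝ) ≤ Pw n p e * (if D (f i + e) = f i then 1 else 0) :=
          mul_nonneg hPw0 hind
        linarith
    have hexp : ∑ e : Fin n → ZMod 2, Pw n p e *
            (1 - ((if ¬ ((hammingNorm e : ℝ) ≤ r * n) then 1 else 0) +
              ∑ j ∈ Finset.univ.erase i,
                (if ((hammingDist (f j) (f i + e) : ℝ)) ≤ r * n then (1:ℝ) else 0)))
        = 1 - errB n M p r f i := by
      unfold errB
      simp only [mul_one_sub]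
      rw [Finset.sum_sub_distrib, sum_Pw]
    rw [← hexp]
    exact Finset.sum_le_sum fun e _ => hpoint e
  -- final accounting
  have hIpos : (0:ℝ) < (I.card : ℝ) := by
    have : 0 < I.card := by rw [← hcardCn]; exact hCnpos
    exact_mod_cast this
  have hS : (I.card : ℝ) * (1 - δ₀/2) ≤ ∑ i ∈ I, ∑ e : Fin n → ZMod 2,
      Pw n p e * (if D (f i + e) = f i then 1 else 0) := by
    have h1 : ∑ i ∈ I, errB n M p r f i ≤ ∑ i : Fin M, errB n M p r f i :=
      Finset.sum_le_sum_of_subset_of_nonneg (Finset.subset_univ I)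
        (fun i _ _ => herrnn i)
    have h2 : (M:ℝ)*(δ₀/4) ≤ (I.card:ℝ)*(δ₀/2) := by
      have h9 : (M:ℝ) ≤ 2 * (I.card:ℝ) := by linarith
      have h10 : (M:ℝ) * (δ₀/4) ≤ (2 * (I.card:ℝ)) * (δ₀/4) :=
        mul_le_mul_of_nonneg_right h9 (by positivity)
      linarith
    calc (I.card:ℝ) * (1 - δ₀/2)
        = (I.card:ℝ) - (I.card:ℝ)*(δ₀/2) := by ring
      _ ≤ (I.card:ℝ) - ∑ i ∈ I, errB n M p r f i := by linarith
      _ = ∑ i ∈ I, (1 - errB n M p r f i) := by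
          rw [Finset.sum_sub_distrib, Finset.sum_const, nsmul_eq_mul, mul_one]
      _ ≤ _ := Finset.sum_le_sum hcorrect
  have hsum_image : ∑ u ∈ Cn, ∑ e : Fin n → ZMod 2,
      p ^ hammingNorm e * (1 - p) ^ (n - hammingNorm e) *
        (if D (u + e) = u then 1 else 0)
      = ∑ i ∈ I, ∑ e : Fin n → ZMod 2,
          Pw n p e * (if D (f i + e) = f i then 1 else 0) := by
    rw [hCndef, Finset.sum_image (fun x hx y hy h => hinjI hx hy h)]
    unfold Pw
    rfl
  rw [hsum_image, hcardCn]
  have hfinal : (1 - δ₀/2) ≤ (1 / (I.card : ℝ)) * ∑ i ∈ I, ∑ e : Fin n → ZMod 2,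
      Pw n p e * (if D (f i + e) = f i then 1 else 0) := by
    rw [one_div, inv_mul_eq_div, le_div_iff₀ hIpos]
    calc (1 - δ₀/2) * (I.card:ℝ) = (I.card:ℝ) * (1 - δ₀/2) := by ring
      _ ≤ _ := hS
  have : (1:ℝ) - δ < 1 - δ₀/2 := by linarith
  linarith
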